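/- For any Euclidean j-simplex σ, the fatness and thickness satisfy Θ(σ)^j ≤ Γ(σ) ≤ Θ(σ)/(j−1)!, where Γ(σ) = vol_j(σ)/L(σ)^j is the fatness and Θ(σ) is the thickness. -/

import Mathlib

noncomputable section

open Metric Matrix

/-- The altitude of vertex `i` of the simplex with vertices `v`: the distance
from `v i` to the affine hull of the opposite facet. -/
def altitude {m k : ℕ} (v : Fin (k + 1) → EuclideanSpace ℝ (Fin m)) (i : Fin (k + 1)) : ℝ :=
  Metric.infDist (v i) (affineSpan ℝ (v '' {j | j ≠ i}) : Set (EuclideanSpace ℝ (Fin m)))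

/-- The longest edge length of the simplex with vertices `v`. -/
def longestEdge {m k : ℕ} (v : Fin (k + 1) → EuclideanSpace ℝ (Fin m)) : ℝ :=
  sSup {d : ℝ | ∃ i j, d = dist (v i) (v j)}

/-- The thickness of the simplex with vertices `v`. -/
def thickness {m k : ℕ} (v : Fin (k + 1) → EuclideanSpace ℝ (Fin m)) : ℝ :=
  if k = 0 then 1 else (sInf (Set.range (altitude v))) / (k * longestEdge v)

/-- The `m × k` matrix whose `j`-th column is `v (j+1) - v 0`. -/
def edgeMat {m k : ℕ} (v : Fin (k + 1) → EuclideanSpace ℝ (Fin m)) :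
    Matrix (Fin m) (Fin k) ℝ :=
  Matrix.of fun i j => (v j.succ - v 0) i

/-- The smallest singular value of a matrix: the infimum of `‖P x‖` over unit
vectors `x` (Euclidean norms). -/
def smallestSing {m k : ℕ} (P : Matrix (Fin m) (Fin k) ℝ) : ℝ :=
  sInf { r : ℝ | ∃ x : EuclideanSpace ℝ (Fin k), ‖x‖ = 1 ∧
    r = ‖(EuclideanSpace.equiv (Fin m) ℝ).symm (P.mulVec (EuclideanSpace.equiv (Fin k) ℝ x))‖ }

/-- The `j`-dimensional volume of the simplex with vertices `v`, computed as
`√(det Gram)/j!` where `Gram` is the Gram matrix of the edge vectors from `v 0`. -/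
def simVol {m j : ℕ} (v : Fin (j + 1) → EuclideanSpace ℝ (Fin m)) : ℝ :=
  Real.sqrt (Matrix.det (Matrix.of fun i l : Fin j =>
    (inner ℝ (v i.succ - v 0) (v l.succ - v 0) : ℝ))) / (Nat.factorial j)


namespace FatThick
open Submodule

variable {m : ℕ}

local notation "E" => EuclideanSpace ℝ (Fin m)

def gram {n : ℕ} (e : Fin n → E) : Matrix (Fin n) (Fin n) ℝ :=
  Matrix.of fun i l => (inner ℝ (e i) (e l) : ℝ)

lemma gram_det_eq_zero {n : ℕ} (e : Fin (n + 1) → E)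
    (h : e 0 ∈ span ℝ (Set.range (e ∘ Fin.succ))) : (gram e).det = 0 := by
  obtain ⟨c, hc⟩ := mem_span_range_iff_exists_fun ℝ |>.mp h
  refine Matrix.exists_mulVec_eq_zero_iff.mp ⟨Fin.cons (-1) c, ?_, ?_⟩
  · intro h0
    have := congrFun h0 0
    simp at this
  · funext i
    have : (gram e).mulVec (Fin.cons (-1) c) i
        = (inner ℝ (e i) (∑ l, (Fin.cons (-1) c : Fin (n+1) → ℝ) l • e l) : ℝ) := by
      rw [inner_sum]
      simp only [Matrix.mulVec, dotProduct, gram, Matrix.of_apply,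
        real_inner_smul_right]
      exact Finset.sum_congr rfl fun l _ => mul_comm _ _
    rw [this, Fin.sum_univ_succ]
    simp only [Fin.cons_zero, Fin.cons_succ, neg_one_smul]
    rw [show ∑ l : Fin n, c l • e l.succ = e 0 from hc]
    simp

lemma gram_det_succ {n : ℕ} (e : Fin (n + 1) → E) :
    (gram e).det
      = infDist (e 0) (span ℝ (Set.range (e ∘ Fin.succ)) : Set E) ^ 2
        * (gram (e ∘ Fin.succ)).det := by
  set K := span ℝ (Set.range (e ∘ Fin.succ)) with hK
  set p : E := (orthogonalProjection K (e 0) : E) with hp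
  set w : E := e 0 - p with hwdef
  have hw : w ∈ Kᗮ := Submodule.sub_starProjection_mem_orthogonal (K := K) _
  have hpK : p ∈ K := (orthogonalProjection K (e 0)).2
  have horth : ∀ x ∈ K, (inner ℝ w x : ℝ) = 0 := fun x hx =>
    (Submodule.mem_orthogonal' K w).mp hw x hx
  have horth' : ∀ x ∈ K, (inner ℝ x w : ℝ) = 0 := fun x hx => by
    rw [real_inner_comm]; exact horth x hx
  have hdist : infDist (e 0) (K : Set E) = ‖w‖ := by
    rw [infDist_eq_iInf]
    simp_rw [dist_eq_norm]
    exact (Submodule.starProjection_minimal (U := K) (e 0)).symm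
  set f : Fin (n + 1) → E := Fin.cons p (e ∘ Fin.succ) with hf
  have hfs : f ∘ Fin.succ = e ∘ Fin.succ := by
    funext i; simp [hf]
  have he0 : e 0 = p + w := by rw [hwdef]; abel
  have hmemK : ∀ l : Fin n, e l.succ ∈ K := fun l =>
    subset_span ⟨l, rfl⟩
  have hupd : gram e
      = (gram f).updateRow 0 (gram f 0 + (‖w‖ ^ 2 : ℝ) • (Pi.single (0 : Fin (n+1)) (1 : ℝ) : Fin (n+1) → ℝ)) := by
    ext i l
    refine Fin.cases ?_ ?_ i
    · rw [Matrix.updateRow_self]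
      refine Fin.cases ?_ ?_ l
      · simp only [Pi.add_apply, Pi.smul_apply, Pi.single_eq_same, smul_eq_mul, mul_one]
        simp only [gram, Matrix.of_apply, hf, Fin.cons_zero]
        rw [he0, real_inner_add_add_self, horth' p hpK, real_inner_self_eq_norm_sq, real_inner_self_eq_norm_sq]
        ring
      · intro l
        simp only [Pi.add_apply, Pi.smul_apply, smul_eq_mul]
        rw [Pi.single_eq_of_ne (Fin.succ_ne_zero l)]
        simp only [gram, Matrix.of_apply, hf, Fin.cons_zero, Fin.cons_succ, mul_zero, add_zero,
          Function.comp_apply]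
        rw [he0, inner_add_left, horth _ (hmemK l), add_zero]
    · intro i
      rw [Matrix.updateRow_ne (Fin.succ_ne_zero i)]
      refine Fin.cases ?_ ?_ l
      · simp only [gram, Matrix.of_apply, hf, Fin.cons_zero, Fin.cons_succ, Function.comp_apply]
        rw [he0, inner_add_right, horth' _ (hmemK i), add_zero]
      · intro l
        simp [gram, hf]
  have hdet0 : (gram f).det = 0 := by
    apply gram_det_eq_zero
    rw [hfs]
    simpa [hf] using hpK
  have hsub : ((gram f).updateRow 0 (Pi.single (0 : Fin (n+1)) (1:ℝ))).submatrix Fin.succ Fin.succ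
      = gram (e ∘ Fin.succ) := by
    ext i l
    rw [Matrix.submatrix_apply, Matrix.updateRow_ne (Fin.succ_ne_zero i)]
    simp [gram, hf]
  have hcof : ((gram f).updateRow 0 (Pi.single (0 : Fin (n+1)) (1:ℝ))).det
      = (gram (e ∘ Fin.succ)).det := by
    rw [Matrix.det_succ_row_zero, Finset.sum_eq_single 0]
    · rw [Fin.succAbove_zero, hsub, Matrix.updateRow_self]
      simp
    · intro l _ hl
      rw [Matrix.updateRow_self, Pi.single_eq_of_ne hl]
      ring
    · simp
  rw [hupd, Matrix.det_updateRow_add, Matrix.updateRow_eq_self, hdet0,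
    Matrix.det_updateRow_smul, hcof, hdist]
  ring

lemma gram_det_nonneg {n : ℕ} (e : Fin n → E) : 0 ≤ (gram e).det := by
  induction n with
  | zero => simp [Matrix.det_fin_zero]
  | succ n ih =>
    rw [gram_det_succ]
    exact mul_nonneg (sq_nonneg _) (ih _)

lemma sqrt_gram_det_succ {n : ℕ} (e : Fin (n + 1) → E) :
    Real.sqrt (gram e).det
      = infDist (e 0) (span ℝ (Set.range (e ∘ Fin.succ)) : Set E)
        * Real.sqrt (gram (e ∘ Fin.succ)).det := by
  rw [gram_det_succ, Real.sqrt_mul (sq_nonneg _), Real.sqrt_sq infDist_nonneg]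

lemma sqrt_gram_det_le {n : ℕ} (e : Fin n → E) :
    Real.sqrt (gram e).det ≤ ∏ i, ‖e i‖ := by
  induction n with
  | zero => simp [Matrix.det_fin_zero]
  | succ n ih =>
    rw [sqrt_gram_det_succ, Fin.prod_univ_succ]
    refine mul_le_mul ?_ (ih _) (Real.sqrt_nonneg _) (norm_nonneg _)
    have h0 : (0 : E) ∈ (span ℝ (Set.range (e ∘ Fin.succ)) : Set E) :=
      (span ℝ (Set.range (e ∘ Fin.succ))).zero_mem
    calc infDist (e 0) (span ℝ (Set.range (e ∘ Fin.succ)) : Set E)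
        ≤ dist (e 0) 0 := infDist_le_dist_of_mem h0
      _ = ‖e 0‖ := by simp

lemma range_fin_succ {n : ℕ} :
    Set.range (Fin.succ : Fin n → Fin (n + 1)) = {l : Fin (n + 1) | 0 < l} := by
  ext x
  simp only [Set.mem_range, Set.mem_setOf_eq, Fin.pos_iff_ne_zero]
  constructor
  · rintro ⟨l, rfl⟩; exact Fin.succ_ne_zero l
  · intro hx; exact ⟨x.pred hx, Fin.succ_pred _ _⟩

lemma range_succ_eq_image {n : ℕ} (e : Fin (n + 1) → E) :
    Set.range (e ∘ Fin.succ) = e '' {l | 0 < l} := by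
  rw [Set.range_comp, range_fin_succ]

lemma succ_image_gt {n : ℕ} (i : Fin n) :
    Fin.succ '' {l : Fin n | i < l} = {l : Fin (n + 1) | i.succ < l} := by
  ext x
  simp only [Set.mem_image, Set.mem_setOf_eq]
  constructor
  · rintro ⟨l, hl, rfl⟩; exact Fin.succ_lt_succ_iff.mpr hl
  · intro hx
    have hx0 : x ≠ 0 := by
      rintro rfl; exact absurd hx (by simp [Fin.lt_iff_val_lt_val])
    refine ⟨x.pred hx0, ?_, Fin.succ_pred _ _⟩
    rw [← Fin.succ_lt_succ_iff, Fin.succ_pred]; exact hx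

lemma image_succ_gt {n : ℕ} (e : Fin (n + 1) → E) (i : Fin n) :
    (e ∘ Fin.succ) '' {l | i < l} = e '' {l | i.succ < l} := by
  rw [Set.image_comp, succ_image_gt]

lemma pow_le_sqrt_gram_det {n : ℕ} (e : Fin n → E) {c : ℝ} (hc : 0 ≤ c)
    (h : ∀ i : Fin n, c ≤ infDist (e i) (span ℝ (e '' {l | i < l}) : Set E)) :
    c ^ n ≤ Real.sqrt (gram e).det := by
  induction n with
  | zero => simp [Matrix.det_fin_zero]
  | succ n ih =>
    rw [sqrt_gram_det_succ, pow_succ, mul_comm (c ^ n) c]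
    refine mul_le_mul ?_ ?_ (pow_nonneg hc _) infDist_nonneg
    · rw [range_succ_eq_image]
      exact h 0
    · refine ih _ fun i => ?_
      have := h i.succ
      rwa [← image_succ_gt] at this

lemma sqrt_gram_det_le_head {n : ℕ} (e : Fin (n + 1) → E) :
    Real.sqrt (gram e).det
      ≤ infDist (e 0) (span ℝ (e '' {l | l ≠ 0}) : Set E) * ∏ i : Fin n, ‖e i.succ‖ := by
  rw [sqrt_gram_det_succ]
  have hset : Set.range (e ∘ Fin.succ) = e '' {l | l ≠ 0} := by
    rw [range_succ_eq_image]
    congr 1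
    ext l; simp [Fin.pos_iff_ne_zero]
  rw [hset]
  refine mul_le_mul_of_nonneg_left ?_ infDist_nonneg
  calc Real.sqrt (gram (e ∘ Fin.succ)).det ≤ ∏ i, ‖(e ∘ Fin.succ) i‖ := sqrt_gram_det_le _
    _ = ∏ i : Fin n, ‖e i.succ‖ := rfl

-- ===== bridge lemmas: affine spans and altitudes =====

lemma coe_affineSpan_eq {n : ℕ} (v : Fin (n + 1) → E) (T : Set (Fin (n + 1)))
    (hT : (0 : Fin (n + 1)) ∈ T) :
    (affineSpan ℝ (v '' T) : Set E)
      = (fun x => v 0 + x) '' (span ℝ ((fun s => v s - v 0) '' T) : Set E) := by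
  have h0 : v 0 ∈ v '' T := ⟨0, hT, rfl⟩
  have hdir : (affineSpan ℝ (v '' T)).direction = span ℝ ((fun s => v s - v 0) '' T) := by
    rw [direction_affineSpan, vectorSpan_eq_span_vsub_set_right ℝ h0, ← Set.image_comp]
    rfl
  ext x
  simp only [Set.mem_image, SetLike.mem_coe]
  constructor
  · intro hx
    refine ⟨x - v 0, ?_, by abel⟩
    rw [← SetLike.mem_coe, ← hdir]
    have := (AffineSubspace.vsub_right_mem_direction_iff_mem (mem_affineSpan ℝ h0) x).mpr hx
    simpa using this
  · rintro ⟨y, hy, rfl⟩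
    have hmem : (v 0 + y) -ᵥ v 0 ∈ (affineSpan ℝ (v '' T)).direction := by
      rw [hdir]; simpa using hy
    exact (AffineSubspace.vsub_right_mem_direction_iff_mem (mem_affineSpan ℝ h0) _).mp hmem

lemma altitude_eq_infDist {n : ℕ} (v : Fin (n + 1 + 1) → E) (i : Fin (n + 1)) :
    altitude v i.succ = infDist (v i.succ - v 0)
      (span ℝ ((fun l : Fin (n + 1) => v l.succ - v 0) '' {l | l ≠ i}) : Set E) := by
  have hT : (0 : Fin (n + 2)) ∈ {s : Fin (n + 2) | s ≠ i.succ} :=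
    fun h => Fin.succ_ne_zero i h.symm
  have himg : (fun s => v s - v 0) '' {s : Fin (n + 2) | s ≠ i.succ}
      = insert 0 ((fun l : Fin (n + 1) => v l.succ - v 0) '' {l | l ≠ i}) := by
    ext x
    simp only [Set.mem_image, Set.mem_insert_iff, Set.mem_setOf_eq]
    constructor
    · rintro ⟨s, hs, rfl⟩
      refine Fin.cases ?_ ?_ s hs
      · intro; left; simp
      · intro l hl
        right
        exact ⟨l, fun h => hl (by rw [h]), rfl⟩
    · rintro (rfl | ⟨l, hl, rfl⟩)
      · exact ⟨0, hT, by simp⟩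
      · exact ⟨l.succ, fun h => hl (Fin.succ_injective _ h), rfl⟩
  unfold altitude
  rw [coe_affineSpan_eq v _ hT, himg, Submodule.span_insert_zero]
  have hiso : Isometry (fun x : E => v 0 + x) :=
    Isometry.of_dist_eq fun x y => dist_add_left _ _ _
  have hx : v i.succ = (fun x : E => v 0 + x) (v i.succ - v 0) := by simp
  conv_lhs => rw [hx]
  exact infDist_image hiso

lemma altitude_le_infDist {n : ℕ} (v : Fin (n + 1 + 1) → E) (i : Fin (n + 1))
    (S : Set (Fin (n + 1))) (hS : i ∉ S) :
    altitude v i.succ ≤ infDist (v i.succ - v 0)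
      (span ℝ ((fun l : Fin (n + 1) => v l.succ - v 0) '' S) : Set E) := by
  rw [altitude_eq_infDist]
  refine infDist_le_infDist_of_subset ?_ ⟨0, Submodule.zero_mem _⟩
  exact SetLike.coe_subset_coe.mpr (span_mono (Set.image_mono fun l hl hli => hS (hli ▸ hl)))

lemma altitude_comp_perm {n : ℕ} (v : Fin (n + 1) → E) (π : Equiv.Perm (Fin (n + 1)))
    (i : Fin (n + 1)) : altitude (v ∘ π) i = altitude v (π i) := by
  have hsets : π '' {l | l ≠ i} = {s | s ≠ π i} := by
    ext s
    simp only [Set.mem_image, Set.mem_setOf_eq]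
    constructor
    · rintro ⟨l, hl, rfl⟩
      exact fun h => hl (π.injective h)
    · intro hs
      exact ⟨π.symm s, fun h => hs (by rw [← Equiv.apply_symm_apply π s, h]),
        Equiv.apply_symm_apply _ _⟩
  have himg : (v ∘ π) '' {l | l ≠ i} = v '' {s | s ≠ π i} := by
    rw [Set.image_comp, hsets]
  unfold altitude
  rw [himg]
  rfl

lemma dist_le_longestEdge {n : ℕ} (v : Fin (n + 1) → E) (i l : Fin (n + 1)) :
    dist (v i) (v l) ≤ longestEdge v := by
  have hset : {d : ℝ | ∃ i j, d = dist (v i) (v j)}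
      = Set.range (fun p : Fin (n + 1) × Fin (n + 1) => dist (v p.1) (v p.2)) := by
    ext d
    constructor
    · rintro ⟨i, j, rfl⟩; exact ⟨(i, j), rfl⟩
    · rintro ⟨⟨i, j⟩, rfl⟩; exact ⟨i, j, rfl⟩
  unfold longestEdge
  rw [hset]
  exact le_csSup (Set.Finite.bddAbove (Set.finite_range _)) ⟨(i, l), rfl⟩

-- ===== permutation invariance of the Gram determinant =====

lemma gram_eq_transpose_mul {n : ℕ} (v : Fin (n + 1) → E) :
    gram (fun i : Fin n => v i.succ - v 0) = (edgeMat v)ᵀ * edgeMat v := by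
  ext i l
  simp only [gram, Matrix.of_apply, Matrix.mul_apply, Matrix.transpose_apply, edgeMat]
  rw [PiLp.inner_apply]
  simp [RCLike.inner_apply, conj_trivial]
  exact Finset.sum_congr rfl fun _ _ => mul_comm _ _

lemma gram_det_comp_perm_fix0 {n : ℕ} (v : Fin (n + 1) → E) (π : Equiv.Perm (Fin (n + 1)))
    (hπ : π 0 = 0) :
    (gram fun i : Fin n => (v ∘ π) i.succ - (v ∘ π) 0).det
      = (gram fun i : Fin n => v i.succ - v 0).det := by
  have hne : ∀ i : Fin n, π i.succ ≠ 0 := fun i h =>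
    Fin.succ_ne_zero i (π.injective (h.trans hπ.symm))
  have hne' : ∀ i : Fin n, π.symm i.succ ≠ 0 := fun i h => by
    have : i.succ = π 0 := by rw [← h, Equiv.apply_symm_apply]
    exact Fin.succ_ne_zero i (this.trans hπ)
  set σ : Equiv.Perm (Fin n) :=
    { toFun := fun i => (π i.succ).pred (hne i)
      invFun := fun i => (π.symm i.succ).pred (hne' i)
      left_inv := fun i => by simp [Fin.succ_pred, Fin.pred_succ]
      right_inv := fun i => by simp [Fin.succ_pred, Fin.pred_succ] } with hσ
  have hgram : (gram fun i : Fin n => (v ∘ π) i.succ - (v ∘ π) 0)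
      = (gram fun i : Fin n => v i.succ - v 0).submatrix σ σ := by
    ext i l
    simp only [gram, Matrix.of_apply, Matrix.submatrix_apply, Function.comp_apply, hπ]
    have h1 : ∀ t : Fin n, v ((σ t).succ) = v (π t.succ) := fun t => by
      rw [hσ]; simp [Fin.succ_pred]
    rw [h1, h1]
  rw [hgram, Matrix.det_submatrix_equiv_self]

def swapMat (n : ℕ) : Matrix (Fin (n + 1)) (Fin (n + 1)) ℝ :=
  Matrix.of fun s l => (if l ≠ 0 ∧ s = l then (1 : ℝ) else 0) - (if s = 0 then 1 else 0)

lemma swapMat_det_sq (n : ℕ) : (swapMat n).det ^ 2 = 1 := by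
  have htri : (swapMat n).BlockTriangular id := by
    intro i l hil
    have h1 : ¬(l ≠ 0 ∧ i = l) := fun ⟨_, h⟩ => absurd (h ▸ hil) (lt_irrefl _)
    have h2 : i ≠ 0 := by
      intro h
      rw [h] at hil
      exact absurd hil (by simp [Fin.lt_iff_val_lt_val])
    simp only [swapMat, Matrix.of_apply, if_neg h1, if_neg h2, sub_zero]
  rw [Matrix.det_of_upperTriangular htri, ← Finset.prod_pow]
  refine Finset.prod_eq_one fun i _ => ?_
  by_cases hi : i = 0 <;> simp [swapMat, hi]

lemma edgeMat_swap {n : ℕ} (v : Fin (n + 1 + 1) → E) :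
    edgeMat (v ∘ Equiv.swap 0 1) = edgeMat v * swapMat n := by
  ext t l
  simp only [edgeMat, Matrix.of_apply, Matrix.mul_apply, Function.comp_apply, swapMat,
    mul_sub]
  rw [Finset.sum_sub_distrib]
  have hs2 : ∑ s : Fin (n + 1), (v s.succ - v 0) t * (if s = 0 then (1:ℝ) else 0)
      = (v (0 : Fin (n+1)).succ - v 0) t := by
    rw [Finset.sum_eq_single 0]
    · simp
    · intro s _ hs; simp [hs]
    · simp
  by_cases hl : l = 0
  · subst hl
    have hs1 : ∑ s : Fin (n + 1), (v s.succ - v 0) t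
        * (if (0 : Fin (n+1)) ≠ 0 ∧ s = 0 then (1:ℝ) else 0) = 0 := by
      refine Finset.sum_eq_zero fun s _ => by simp
    rw [hs1, hs2]
    have hswap : Equiv.swap (0 : Fin (n+2)) 1 (0 : Fin (n+1)).succ = 0 := by
      rw [show ((0 : Fin (n+1)).succ) = (1 : Fin (n+2)) by rfl]
      exact Equiv.swap_apply_right 0 1
    rw [hswap, Equiv.swap_apply_left]
    show (v 0 - v 1) t = 0 - (v 1 - v 0) t
    simp [PiLp.sub_apply]
  · have hs1 : ∑ s : Fin (n + 1), (v s.succ - v 0) t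
        * (if l ≠ 0 ∧ s = l then (1:ℝ) else 0) = (v l.succ - v 0) t := by
      rw [Finset.sum_eq_single l]
      · simp [hl]
      · intro s _ hs; simp [hs]
      · simp
    rw [hs1, hs2]
    have hl1 : (l.succ : Fin (n+2)) ≠ 1 := by
      intro h
      apply hl
      have h2 : l.succ = (0 : Fin (n+1)).succ := by rw [h]; rfl
      exact Fin.succ_injective _ h2
    have hswap : Equiv.swap (0 : Fin (n+2)) 1 l.succ = l.succ :=
      Equiv.swap_apply_of_ne_of_ne (Fin.succ_ne_zero l) hl1
    rw [hswap, Equiv.swap_apply_left]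
    show (v l.succ - v 1) t = (v l.succ - v 0) t - (v 1 - v 0) t
    simp [PiLp.sub_apply]

lemma gram_det_swap01 {n : ℕ} (v : Fin (n + 1 + 1) → E) :
    (gram fun i : Fin (n + 1) => (v ∘ Equiv.swap 0 1) i.succ - (v ∘ Equiv.swap 0 1) 0).det
      = (gram fun i : Fin (n + 1) => v i.succ - v 0).det := by
  rw [gram_eq_transpose_mul (v ∘ Equiv.swap 0 1), gram_eq_transpose_mul v, edgeMat_swap]
  have hassoc : (edgeMat v * swapMat n)ᵀ * (edgeMat v * swapMat n)
      = (swapMat n)ᵀ * ((edgeMat v)ᵀ * edgeMat v) * swapMat n := by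
    simp only [Matrix.transpose_mul, Matrix.mul_assoc]
  rw [hassoc, Matrix.det_mul, Matrix.det_mul, Matrix.det_transpose]
  have hsq := swapMat_det_sq n
  calc (swapMat n).det * ((edgeMat v)ᵀ * edgeMat v).det * (swapMat n).det
      = ((edgeMat v)ᵀ * edgeMat v).det * (swapMat n).det ^ 2 := by ring
    _ = ((edgeMat v)ᵀ * edgeMat v).det := by rw [hsq, mul_one]

end FatThick

/-- **Fatness and thickness.**  For any `j`-simplex (`j ≥ 1`),
`Θ(σ)^j ≤ Γ(σ) ≤ Θ(σ)/(j-1)!` where `Γ(σ) = vol_j(σ)/L(σ)^j`. -/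
theorem fatness_thickness {m j : ℕ} (hj : 1 ≤ j)
    (v : Fin (j + 1) → EuclideanSpace ℝ (Fin m)) (hv : AffineIndependent ℝ v) :
    thickness v ^ j ≤ simVol v / longestEdge v ^ j ∧
    simVol v / longestEdge v ^ j ≤ thickness v / (Nat.factorial (j - 1)) := by
  obtain ⟨k, rfl⟩ : ∃ k, j = k + 1 := ⟨j - 1, (Nat.succ_pred_eq_of_pos hj).symm⟩
  classical
  have hsim : simVol v
      = Real.sqrt (FatThick.gram fun i : Fin (k + 1) => v i.succ - v 0).det
        / (Nat.factorial (k + 1)) := rfl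
  have hthick : thickness v
      = sInf (Set.range (altitude v)) / ((k + 1 : ℕ) * longestEdge v) := by
    simp only [thickness]
    rw [if_neg (Nat.succ_ne_zero k)]
  set L := longestEdge v with hL
  set a := sInf (Set.range (altitude v)) with ha
  set g := Real.sqrt (FatThick.gram fun i : Fin (k + 1) => v i.succ - v 0).det with hg
  have hg0 : 0 ≤ g := Real.sqrt_nonneg _
  have hLd : ∀ i l, dist (v i) (v l) ≤ L := FatThick.dist_le_longestEdge v
  have h01 : (0 : Fin (k + 2)) ≠ 1 := by simp [Fin.ext_iff]
  have hv01 : v 0 ≠ v 1 := fun h => h01 (hv.injective h)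
  have hLpos : 0 < L := lt_of_lt_of_le (dist_pos.mpr hv01) (hLd 0 1)
  obtain ⟨i0, hi0⟩ : ∃ i0, altitude v i0 = a := by
    have hmem : a ∈ Set.range (altitude v) :=
      (Set.range_nonempty (altitude v)).csInf_mem (Set.finite_range _)
    exact hmem
  have hale : ∀ i, a ≤ altitude v i := fun i =>
    csInf_le (Set.Finite.bddBelow (Set.finite_range _)) ⟨i, rfl⟩
  have ha0 : 0 ≤ a := hi0 ▸ Metric.infDist_nonneg
  have hfacpos : (0 : ℝ) < ((k + 1).factorial : ℝ) := by
    exact_mod_cast Nat.factorial_pos (k + 1)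
  have hB : (0 : ℝ) < ((k + 1).factorial : ℝ) * L ^ (k + 1) :=
    mul_pos hfacpos (pow_pos hLpos _)
  -- lower bound on g
  have hglow : a ^ (k + 1) ≤ g :=
    FatThick.pow_le_sqrt_gram_det _ ha0 (fun i =>
      le_trans (hale i.succ) (FatThick.altitude_le_infDist v i _ (by simp)))
  -- upper bound on g
  have hgup : g ≤ a * L ^ k := by
    obtain ⟨π, hπ1, hgeq⟩ :
        ∃ π : Equiv.Perm (Fin (k + 2)), π 1 = i0 ∧
          (FatThick.gram fun i : Fin (k + 1) => (v ∘ π) i.succ - (v ∘ π) 0).det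
            = (FatThick.gram fun i : Fin (k + 1) => v i.succ - v 0).det := by
      by_cases h0 : i0 = 0
      · subst h0
        exact ⟨Equiv.swap 0 1, Equiv.swap_apply_right 0 1, FatThick.gram_det_swap01 v⟩
      · exact ⟨Equiv.swap 1 i0, Equiv.swap_apply_left 1 i0,
          FatThick.gram_det_comp_perm_fix0 v _
            (Equiv.swap_apply_of_ne_of_ne h01 fun h => h0 h.symm)⟩
    set w := v ∘ π with hw
    have hgw : Real.sqrt (FatThick.gram fun i : Fin (k + 1) => w i.succ - w 0).det = g := by
      rw [hg]
      exact congrArg Real.sqrt hgeq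
    have hhead := FatThick.sqrt_gram_det_le_head (fun i : Fin (k + 1) => w i.succ - w 0)
    have halt : Metric.infDist ((fun i : Fin (k + 1) => w i.succ - w 0) 0)
        (Submodule.span ℝ ((fun i : Fin (k + 1) => w i.succ - w 0) '' {l | l ≠ 0})
          : Set (EuclideanSpace ℝ (Fin m))) = a := by
      rw [← FatThick.altitude_eq_infDist w (0 : Fin (k + 1))]
      have h1 : altitude w ((0 : Fin (k + 1)).succ) = altitude v (π ((0 : Fin (k + 1)).succ)) :=
        FatThick.altitude_comp_perm v π _
      rw [h1, show π ((0 : Fin (k + 1)).succ) = i0 from hπ1, hi0]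
    have hprod : ∏ i : Fin k, ‖(fun i : Fin (k + 1) => w i.succ - w 0) i.succ‖ ≤ L ^ k := by
      calc ∏ i : Fin k, ‖(fun i : Fin (k + 1) => w i.succ - w 0) i.succ‖
          ≤ ∏ _i : Fin k, L :=
            Finset.prod_le_prod (fun i _ => norm_nonneg _) (fun i _ => by
              show ‖w i.succ.succ - w 0‖ ≤ L
              rw [← dist_eq_norm]
              exact hLd _ _)
        _ = L ^ k := by rw [Finset.prod_const, Finset.card_univ, Fintype.card_fin]
    rw [← hgw]
    calc Real.sqrt (FatThick.gram fun i : Fin (k + 1) => w i.succ - w 0).det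
        ≤ Metric.infDist ((fun i : Fin (k + 1) => w i.succ - w 0) 0)
            (Submodule.span ℝ ((fun i : Fin (k + 1) => w i.succ - w 0) '' {l | l ≠ 0})
              : Set (EuclideanSpace ℝ (Fin m)))
          * ∏ i : Fin k, ‖(fun i : Fin (k + 1) => w i.succ - w 0) i.succ‖ := hhead
      _ = a * ∏ i : Fin k, ‖(fun i : Fin (k + 1) => w i.succ - w 0) i.succ‖ := by rw [halt]
      _ ≤ a * L ^ k := mul_le_mul_of_nonneg_left hprod ha0
  constructor
  · rw [hsim, hthick, div_pow, div_div]
    refine div_le_div₀ hg0 hglow hB ?_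
    rw [mul_pow]
    refine mul_le_mul_of_nonneg_right ?_ (pow_nonneg hLpos.le _)
    calc ((k + 1).factorial : ℝ) ≤ (((k + 1) ^ (k + 1) : ℕ) : ℝ) := by
          exact_mod_cast Nat.factorial_le_pow (k + 1)
      _ = ((k + 1 : ℕ) : ℝ) ^ (k + 1) := by push_cast; ring
  · rw [hsim, hthick, div_div, div_div]
    simp only [Nat.add_sub_cancel]
    have hDpos : (0 : ℝ) < ((k + 1 : ℕ) : ℝ) * L * (k.factorial : ℝ) := by
      refine mul_pos (mul_pos ?_ hLpos) ?_
      · exact_mod_cast Nat.succ_pos k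
      · exact_mod_cast Nat.factorial_pos k
    rw [div_le_div_iff₀ hB hDpos]
    have hD : ((k + 1 : ℕ) : ℝ) * L * (k.factorial : ℝ) = ((k + 1).factorial : ℝ) * L := by
      push_cast [Nat.factorial_succ]
      ring
    calc g * (((k + 1 : ℕ) : ℝ) * L * (k.factorial : ℝ))
        = g * (((k + 1).factorial : ℝ) * L) := by rw [hD]
      _ ≤ (a * L ^ k) * (((k + 1).factorial : ℝ) * L) :=
          mul_le_mul_of_nonneg_right hgup (by positivity)
      _ = a * (((k + 1).factorial : ℝ) * L ^ (k + 1)) := by rw [pow_succ]; ring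

end
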